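/- arXiv:0810.2180 — 3 statements merged into one kernel-verified Lean document; each statement's English description precedes it below -/
import Mathlib

section
/- The center of the group G' = G₀(𝔽_p[t,t⁻¹]) is exactly the set of elementary matrices { e₁₅(a) : a ∈ 𝔽_p[t,t⁻¹] }, and the map a ↦ e₁₅(a) is an isomorphism from the additive group of 𝔽_p[t,t⁻¹] onto the center Z(G'). -/
open Matrix LaurentPolynomial

/-- Laurent polynomial ring `𝔽_p[t,t⁻¹]`. -/
abbrev Lp (p : ℕ) : Type := LaurentPolynomial (ZMod p)

/-- The subgroup `G₀(R) ≤ SL₅(R)` of matrices with first column `(1,0,0,0,0)ᵗ`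
and last row `(0,0,0,0,1)`. -/
def G0 (R : Type) [CommRing R] : Subgroup (Matrix.SpecialLinearGroup (Fin 5) R) where
  carrier := {g | (∀ i : Fin 5, g.1 i 0 = if i = 0 then 1 else 0) ∧
                  (∀ j : Fin 5, g.1 4 j = if j = 4 then 1 else 0)}
  one_mem' := by
    constructor <;> intro i <;> simp [Matrix.one_apply, eq_comm]
  mul_mem' := by
    rintro g h ⟨hg1, hg2⟩ ⟨hh1, hh2⟩
    constructor
    · intro i
      have : (g * h).1 i 0 = ∑ k, g.1 i k * h.1 k 0 := by
        rw [Matrix.SpecialLinearGroup.coe_mul, Matrix.mul_apply]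
      rw [this]
      simp only [hh1]
      simp [hg1 i]
    · intro j
      have : (g * h).1 4 j = ∑ k, g.1 4 k * h.1 k j := by
        rw [Matrix.SpecialLinearGroup.coe_mul, Matrix.mul_apply]
      rw [this]
      simp only [hg2]
      simp [hh2 j]
  inv_mem' := by
    rintro g ⟨hg1, hg2⟩
    constructor
    · intro i
      have h1 : (g⁻¹ * g).1 i 0 = ∑ k, (g⁻¹).1 i k * g.1 k 0 := by
        rw [Matrix.SpecialLinearGroup.coe_mul, Matrix.mul_apply]
      have h2 : (g⁻¹ * g).1 i 0 = if i = 0 then 1 else 0 := by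
        rw [inv_mul_cancel]; simp [Matrix.one_apply]
      rw [h1] at h2
      simp only [hg1] at h2
      simpa using h2
    · intro j
      have h1 : (g * g⁻¹).1 4 j = ∑ k, g.1 4 k * (g⁻¹).1 k j := by
        rw [Matrix.SpecialLinearGroup.coe_mul, Matrix.mul_apply]
      have h2 : (g * g⁻¹).1 4 j = if j = 4 then 1 else 0 := by
        rw [mul_inv_cancel]; simp [Matrix.one_apply, eq_comm]
      rw [h1] at h2
      simp only [hg2] at h2
      simpa using h2

/-- The elementary matrix `e₁₅(a) = I + a·E₁₅` as an element of `SL₅(R)`. -/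
def e15SL (R : Type) [CommRing R] (a : R) : Matrix.SpecialLinearGroup (Fin 5) R :=
  ⟨1 + Matrix.single 0 4 a, Matrix.det_transvection_of_ne 0 4 (by decide) a⟩

/-- `e₁₅(a)` as an element of `G₀(R)`. -/
def e15 (R : Type) [CommRing R] (a : R) : G0 R :=
  ⟨e15SL R a, by
    constructor
    · intro i
      simp [e15SL, Matrix.one_apply, Matrix.single, Matrix.add_apply]
    · intro j
      simp [e15SL, Matrix.one_apply, Matrix.single, Matrix.add_apply, eq_comm]⟩



section Aux

variable {R : Type} [CommRing R]

/-- `e₁₅` is central in `G₀(R)`. -/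
lemma e15_mem_center (a : R) : e15 R a ∈ Subgroup.center (G0 R) := by
  rw [Subgroup.mem_center_iff]
  intro g
  obtain ⟨⟨M, hdet⟩, hM1, hM2⟩ := g
  apply Subtype.ext
  apply Subtype.ext
  show M * (1 + Matrix.single 0 4 a) = (1 + Matrix.single 0 4 a) * M
  rw [mul_add, add_mul, mul_one, one_mul]
  congr 1
  ext k l
  by_cases hl : l = 4
  · subst hl
    rw [Matrix.mul_single_apply_same]
    by_cases hk : k = 0
    · subst hk
      rw [Matrix.single_mul_apply_same]
      simp_all
    · rw [Matrix.single_mul_apply_of_ne a 0 4 k 4 hk]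
      have := hM1 k
      simp_all
  · rw [Matrix.mul_single_apply_of_ne a 0 4 k l hl]
    by_cases hk : k = 0
    · subst hk
      rw [Matrix.single_mul_apply_same]
      have := hM2 l
      simp_all
    · rw [Matrix.single_mul_apply_of_ne a 0 4 k l hk]

set_option maxRecDepth 8000 in
/-- The transvection `1 + E_{ij}` as an element of `G₀(R)`, for `i ≠ 4`, `j ≠ 0`. -/
def tG0 (i j : Fin 5) (hij : i ≠ j) (hi : i ≠ 4) (hj : j ≠ 0) : G0 R :=
  ⟨⟨1 + Matrix.single i j (1 : R), Matrix.det_transvection_of_ne i j hij 1⟩, by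
    constructor
    · intro k
      show (1 + Matrix.single i j (1 : R)) k 0 = _
      have : ¬ (i = k ∧ j = 0) := fun h => hj h.2
      simp [Matrix.add_apply, Matrix.one_apply, Matrix.single, this, eq_comm]
    · intro l
      show (1 + Matrix.single i j (1 : R)) 4 l = _
      have : ¬ (i = (4 : Fin 5) ∧ j = l) := fun h => hi h.1
      simp [Matrix.add_apply, Matrix.one_apply, Matrix.single, this, eq_comm]⟩

lemma entry_zero_col {M : Matrix (Fin 5) (Fin 5) R} {i j : Fin 5}
    (h : Matrix.single i j (1 : R) * M = M * Matrix.single i j 1)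
    (k : Fin 5) (hk : k ≠ i) : M k i = 0 := by
  have h2 := congrFun (congrFun h k) j
  rw [Matrix.single_mul_apply_of_ne 1 i j k j hk,
      Matrix.mul_single_apply_same] at h2
  simpa using h2.symm

lemma entry_zero_row {M : Matrix (Fin 5) (Fin 5) R} {i j : Fin 5}
    (h : Matrix.single i j (1 : R) * M = M * Matrix.single i j 1)
    (l : Fin 5) (hl : l ≠ j) : M j l = 0 := by
  have h2 := congrFun (congrFun h i) l
  rw [Matrix.single_mul_apply_same,
      Matrix.mul_single_apply_of_ne 1 i j i l hl] at h2
  simpa using h2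

lemma entry_diag {M : Matrix (Fin 5) (Fin 5) R} {i j : Fin 5}
    (h : Matrix.single i j (1 : R) * M = M * Matrix.single i j 1)
    : M j j = M i i := by
  have h2 := congrFun (congrFun h i) j
  rw [Matrix.single_mul_apply_same,
      Matrix.mul_single_apply_same] at h2
  simpa using h2

/-- Any central element of `G₀(R)` is `e₁₅` of its `(0,4)` entry. -/
lemma central_eq_e15 (g : G0 R) (hg : g ∈ Subgroup.center (G0 R)) :
    g = e15 R (g.1.1 0 4) := by
  rw [Subgroup.mem_center_iff] at hg
  set M : Matrix (Fin 5) (Fin 5) R := g.1.1 with hMdef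
  have comm : ∀ (i j : Fin 5) (hij : i ≠ j) (hi : i ≠ 4) (hj : j ≠ 0),
      Matrix.single i j (1 : R) * M = M * Matrix.single i j 1 := by
    intro i j hij hi hj
    have h := hg (tG0 i j hij hi hj)
    have h2 : (1 + Matrix.single i j (1 : R)) * M
        = M * (1 + Matrix.single i j (1 : R)) :=
      congrArg (fun x : G0 R => (x.1 : Matrix (Fin 5) (Fin 5) R)) h
    rw [add_mul, mul_add, one_mul, mul_one] at h2
    exact add_left_cancel h2
  have hM1 := g.2.1
  have hM2 := g.2.2
  have h01 := comm 0 1 (by decide) (by decide) (by decide)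
  have h02 := comm 0 2 (by decide) (by decide) (by decide)
  have h03 := comm 0 3 (by decide) (by decide) (by decide)
  have h14 := comm 1 4 (by decide) (by decide) (by decide)
  have h24 := comm 2 4 (by decide) (by decide) (by decide)
  have h34 := comm 3 4 (by decide) (by decide) (by decide)
  have hd1 : M 1 1 = 1 := by rw [entry_diag h01]; simpa using hM1 0
  have hd2 : M 2 2 = 1 := by rw [entry_diag h02]; simpa using hM1 0
  have hd3 : M 3 3 = 1 := by rw [entry_diag h03]; simpa using hM1 0
  apply Subtype.ext
  apply Subtype.ext
  show M = 1 + Matrix.single 0 4 (M 0 4)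
  ext k l
  have hrhs : (1 + Matrix.single 0 4 (M 0 4)) k l
      = (if k = l then 1 else 0) + (if (0 : Fin 5) = k ∧ (4 : Fin 5) = l then M 0 4 else 0) := by
    simp [Matrix.add_apply, Matrix.one_apply, Matrix.single]
  rw [hrhs]
  fin_cases k <;> fin_cases l
  · simpa using hM1 0
  · exact by simpa using entry_zero_col h14 0 (by decide)
  · exact by simpa using entry_zero_col h24 0 (by decide)
  · exact by simpa using entry_zero_col h34 0 (by decide)
  · simp
  · simpa using hM1 1
  · simpa using hd1
  · exact by simpa using entry_zero_col h24 1 (by decide)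
  · exact by simpa using entry_zero_col h34 1 (by decide)
  · exact by simpa using entry_zero_row h01 4 (by decide)
  · simpa using hM1 2
  · exact by simpa using entry_zero_col h14 2 (by decide)
  · simpa using hd2
  · exact by simpa using entry_zero_col h34 2 (by decide)
  · exact by simpa using entry_zero_row h02 4 (by decide)
  · simpa using hM1 3
  · exact by simpa using entry_zero_col h14 3 (by decide)
  · exact by simpa using entry_zero_col h24 3 (by decide)
  · simpa using hd3
  · exact by simpa using entry_zero_row h03 4 (by decide)
  · simpa using hM1 4
  · simpa using hM2 1
  · simpa using hM2 2
  · simpa using hM2 3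
  · simpa using hM2 4

lemma e15_add (a b : R) : e15 R (a + b) = e15 R a * e15 R b := by
  apply Subtype.ext
  apply Subtype.ext
  show 1 + Matrix.single 0 4 (a + b)
      = (1 + Matrix.single 0 4 a) * (1 + Matrix.single 0 4 b)
  have h0 : Matrix.single 0 4 a * Matrix.single 0 4 b = (0 : Matrix (Fin 5) (Fin 5) R) :=
    Matrix.single_mul_single_of_ne a 0 4 0 (by decide) b
  rw [Matrix.single_add, mul_add, add_mul, add_mul, h0, one_mul, mul_one, one_mul, add_zero]
  abel

lemma e15_entry (a : R) : (e15 R a).1.1 0 4 = a := by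
  show (1 + Matrix.single 0 4 a) 0 4 = a
  simp [Matrix.add_apply, Matrix.one_apply, Matrix.single]

end Aux

/-- The center of `G' = G₀(𝔽_p[t,t⁻¹])` is exactly
`{ e₁₅(a) : a ∈ 𝔽_p[t,t⁻¹] }`, and `a ↦ e₁₅(a)` is an isomorphism from the additive
group of `𝔽_p[t,t⁻¹]` onto the center. -/
theorem stmt_0 (p : ℕ) [Fact p.Prime] :
    (∀ g : G0 (Lp p), g ∈ Subgroup.center (G0 (Lp p)) ↔ ∃ a : Lp p, g = e15 (Lp p) a) ∧
    ∃ φ : Multiplicative (Lp p) ≃* Subgroup.center (G0 (Lp p)),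
      ∀ a : Lp p, (φ (Multiplicative.ofAdd a) : G0 (Lp p)) = e15 (Lp p) a := by

  constructor
  · intro g
    constructor
    · intro hg
      exact ⟨g.1.1 0 4, central_eq_e15 g hg⟩
    · rintro ⟨a, rfl⟩
      exact e15_mem_center a
  · refine ⟨{ toFun := fun a => ⟨e15 (Lp p) a.toAdd, e15_mem_center _⟩
              invFun := fun g => Multiplicative.ofAdd ((g : G0 (Lp p)).1.1 0 4)
              left_inv := fun a => by simp [e15_entry]
              right_inv := fun g => by
                apply Subtype.ext
                exact (central_eq_e15 g.1 g.2).symm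
              map_mul' := fun a b => by
                apply Subtype.ext
                simpa using e15_add a.toAdd b.toAdd }, fun a => rfl⟩
end

section
/- Let C be a residually finite abelian group, regarded as a discrete group. Then the set of characters { φ ∈ Ĉ : there exists a finite-index subgroup N ≤ C with φ|_N trivial } is dense in the Pontryagin dual Ĉ. -/
open Set MeasureTheory QuotientGroup

section aux

variable {C : Type*} [CommGroup C] [TopologicalSpace C] [DiscreteTopology C]

lemma dual_compact : CompactSpace (PontryaginDual C) := by
  have hemb := ContinuousMonoidHom.isEmbedding_toContinuousMap (A := C) (B := Circle)
  show CompactSpace (C →ₜ* Circle)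
  rw [← isCompact_univ_iff, hemb.isCompact_iff, image_univ]
  apply ArzelaAscoli.isCompact_of_equicontinuous
  · have : (ContinuousMap.toFun '' range (ContinuousMonoidHom.toContinuousMap (A := C) (B := Circle)))
        = {f : C → Circle | f 1 = 1} ∩ ⋂ (x) (y), {f : C → Circle | f (x * y) = f x * f y} := by
      ext f
      simp only [mem_inter_iff, mem_iInter, mem_setOf_eq]
      constructor
      · rintro ⟨g, ⟨ψ, rfl⟩, rfl⟩
        exact ⟨map_one ψ, fun x y => map_mul ψ x y⟩
      · rintro ⟨h1, hmul⟩
        exact ⟨ContinuousMap.mk f continuous_of_discreteTopology,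
          ⟨⟨⟨⟨f, h1⟩, hmul⟩, continuous_of_discreteTopology⟩, rfl⟩, rfl⟩
    rw [this]
    have hclosed : IsClosed ({f : C → Circle | f 1 = 1} ∩
        ⋂ (x) (y), {f : C → Circle | f (x * y) = f x * f y}) := by
      apply IsClosed.inter
      · exact isClosed_eq (continuous_apply 1) continuous_const
      · refine isClosed_iInter fun x => isClosed_iInter fun y => ?_
        exact isClosed_eq (continuous_apply (x * y)) ((continuous_apply x).mul (continuous_apply y))
    exact hclosed.isCompact
  · intro x U hU
    rw [show (nhds x : Filter C) = pure x from congrFun (nhds_discrete C) x]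
    exact Filter.eventually_pure.mpr fun i => refl_mem_uniformity hU

lemma exists_sep_char (c : C) (hc : c ≠ 1)
    (hRF : ∀ c : C, c ≠ 1 →
      ∃ (Q : Type) (_ : Group Q) (_ : Finite Q) (ψ : C →* Q), ψ c ≠ 1) :
    ∃ σ : PontryaginDual C,
      (∃ N : Subgroup C, N.FiniteIndex ∧ ∀ n ∈ N, σ n = 1) ∧ σ c ≠ 1 := by
  obtain ⟨Q, _, _, ψ, hψ⟩ := hRF c hc
  haveI : Finite (C ⧸ ψ.ker) := Finite.of_equiv _ (QuotientGroup.quotientKerEquivRange ψ).symm.toEquiv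
  set Q₀ := C ⧸ ψ.ker with hQ₀
  have hq : (QuotientGroup.mk c : Q₀) ≠ 1 := by
    rw [Ne, QuotientGroup.eq_one_iff]
    exact fun h => hψ h
  obtain ⟨ξ, hξ⟩ : ∃ ξ : AddChar (Additive Q₀) ℂ, ξ (Additive.ofMul (QuotientGroup.mk c : Q₀)) ≠ 1 := by
    rw [AddChar.exists_apply_ne_zero]
    exact fun h => hq (congrArg Additive.toMul h)
  -- values have norm one
  have hnorm : ∀ x : Q₀, ‖ξ (Additive.ofMul x)‖ = 1 := by
    intro x
    have hcard : Nat.card Q₀ ≠ 0 := Nat.card_ne_zero.mpr ⟨⟨1⟩, inferInstance⟩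
    refine Complex.norm_eq_one_of_pow_eq_one ?_ hcard
    have : ξ (Additive.ofMul x) ^ Nat.card Q₀ = ξ (Nat.card Q₀ • Additive.ofMul x) :=
      (ξ.map_nsmul_eq_pow _ _).symm
    rw [this, ← ofMul_pow]
    have : x ^ Nat.card Q₀ = 1 := pow_card_eq_one'
    rw [this]
    exact ξ.map_zero_eq_one
  have hmem : ∀ x : Q₀, ξ (Additive.ofMul x) ∈ Submonoid.unitSphere ℂ := by
    intro x
    simpa [Submonoid.unitSphere, mem_sphere_zero_iff_norm] using hnorm x
  let σ₀ : C →* Circle :=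
    { toFun := fun x => ⟨ξ (Additive.ofMul (QuotientGroup.mk x : Q₀)), hmem _⟩
      map_one' := by
        ext
        simp only [QuotientGroup.mk_one]
        exact ξ.map_zero_eq_one
      map_mul' := by
        intro x y
        ext
        push_cast
        rw [QuotientGroup.mk_mul]
        have : Additive.ofMul ((QuotientGroup.mk x : Q₀) * QuotientGroup.mk y)
            = Additive.ofMul (QuotientGroup.mk x : Q₀) + Additive.ofMul (QuotientGroup.mk y : Q₀) := rfl
        rw [this, ξ.map_add_eq_mul]
        rfl }
  refine ⟨⟨σ₀, continuous_of_discreteTopology⟩, ⟨ψ.ker, ?_, ?_⟩, ?_⟩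
  · exact Subgroup.finiteIndex_of_finite_quotient
  · intro n hn
    have : (QuotientGroup.mk n : Q₀) = 1 := (QuotientGroup.eq_one_iff n).mpr hn
    ext
    show (ξ (Additive.ofMul (QuotientGroup.mk n : Q₀)) : ℂ) = 1
    rw [this]
    exact ξ.map_zero_eq_one
  · intro h
    apply hξ
    have h' : σ₀ c = 1 := h
    exact (congrArg (fun z : Circle => (z : ℂ)) h').trans Circle.coe_one

/-- evaluation characters as a monoid hom into `C(Ĉ, ℂ)`. -/
noncomputable def evCM (C : Type*) [CommGroup C] [TopologicalSpace C] :
    C →* C(PontryaginDual C, ℂ) where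
  toFun c := ⟨fun ψ => (ψ c : ℂ), by
    have h1 : Continuous (ContinuousMonoidHom.toContinuousMap :
        PontryaginDual C → C(C, Circle)) :=
      (ContinuousMonoidHom.isInducing_toContinuousMap C Circle).continuous
    have h2 : Continuous fun f : C(C, Circle) => f c :=
      ContinuousEvalConst.continuous_eval_const c
    exact continuous_subtype_val.comp (h2.comp h1)⟩
  map_one' := by
    ext ψ
    show ((ψ 1 : Circle) : ℂ) = 1
    rw [map_one]
    rfl
  map_mul' c d := by
    ext ψ
    show ((ψ (c * d) : Circle) : ℂ) = (ψ c : ℂ) * (ψ d : ℂ)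
    rw [map_mul]
    push_cast
    rfl

lemma star_mem_adjoin {C : Type*} [CommGroup C] [TopologicalSpace C]
    {a : C(PontryaginDual C, ℂ)} (ha : a ∈ Algebra.adjoin ℂ (Set.range (evCM C))) :
    star a ∈ Algebra.adjoin ℂ (Set.range (evCM C)) := by
  induction ha using Algebra.adjoin_induction with
  | mem x hx =>
    obtain ⟨c, rfl⟩ := hx
    have : star (evCM C c) = evCM C c⁻¹ := by
      ext ψ
      show starRingEnd ℂ ((ψ c : Circle) : ℂ) = ((ψ c⁻¹ : Circle) : ℂ)
      rw [map_inv, ← Circle.coe_inv_eq_conj]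
    rw [this]
    exact Algebra.subset_adjoin ⟨c⁻¹, rfl⟩
  | algebraMap r => rw [← algebraMap_star_comm]; exact Subalgebra.algebraMap_mem (Algebra.adjoin ℂ (Set.range (evCM C))) (star r)
  | add x y hx hy ihx ihy => simpa [star_add] using add_mem ihx ihy
  | mul x y hx hy ihx ihy => simpa [star_mul'] using mul_mem ihx ihy

lemma exists_good [CompactSpace (PontryaginDual C)]
    (G : Subgroup (PontryaginDual C)) (hGc : IsClosed (G : Set (PontryaginDual C)))
    (φ : PontryaginDual C) (hφ : φ ∉ G) :
    ∃ c : C, (∀ s ∈ G, s c = 1) ∧ φ c ≠ 1 := by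
  classical
  by_contra hcon
  push_neg at hcon
  have hcontra : ∀ c : C, (∀ s ∈ G, s c = 1) → φ c = 1 := hcon
  -- measure-theoretic setup
  letI : MeasurableSpace ↥G := borel _
  haveI : BorelSpace ↥G := ⟨rfl⟩
  haveI : CompactSpace ↥G := isCompact_iff_compactSpace.mp hGc.isCompact
  let K₀ : TopologicalSpace.PositiveCompacts ↥G := ⊤
  let μ : Measure ↥G := Measure.haarMeasure K₀
  haveI : IsProbabilityMeasure μ := ⟨by
    rw [show (univ : Set ↥G) = ((⊤ : TopologicalSpace.PositiveCompacts ↥G) : Set ↥G) from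
      (TopologicalSpace.PositiveCompacts.coe_top).symm]
    exact Measure.haarMeasure_self⟩
  have integr : ∀ (h : C(PontryaginDual C, ℂ)) (x : PontryaginDual C),
      Integrable (fun t : ↥G => h (x * (t : PontryaginDual C))) μ := by
    intro h x
    have hc : Continuous fun t : ↥G => h (x * (t : PontryaginDual C)) :=
      h.continuous.comp (continuous_const.mul continuous_subtype_val)
    exact hc.integrable_of_hasCompactSupport (HasCompactSupport.of_compactSpace _)
  set J : C(PontryaginDual C, ℂ) → PontryaginDual C → ℂ :=
    fun h x => ∫ t : ↥G, h (x * (t : PontryaginDual C)) ∂μ with hJ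
  -- values of J on characters
  have hchar : ∀ c : C, ∀ x : PontryaginDual C,
      J (evCM C c) x = (x c : ℂ) * J (evCM C c) 1 := by
    intro c x
    have : ∀ t : ↥G, evCM C c (x * (t : PontryaginDual C))
        = (x c : ℂ) * evCM C c (1 * (t : PontryaginDual C)) := by
      intro t
      show (((x * (t : PontryaginDual C)) c : Circle) : ℂ)
        = (x c : ℂ) * (((1 * (t : PontryaginDual C)) c : Circle) : ℂ)
      rw [one_mul]
      push_cast
      rfl
    simp only [hJ, this]
    exact integral_const_mul _ _
  have hIzero : ∀ c : C, (¬ ∀ s ∈ G, s c = 1) → J (evCM C c) 1 = 0 := by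
    intro c hc
    push_neg at hc
    obtain ⟨s, hs, hsc⟩ := hc
    have key : (s c : ℂ) * J (evCM C c) 1 = J (evCM C c) 1 := by
      have hinv := integral_mul_left_eq_self (μ := μ)
        (fun t : ↥G => evCM C c (1 * (t : PontryaginDual C))) ⟨s, hs⟩
      calc (s c : ℂ) * J (evCM C c) 1
          = ∫ t : ↥G, (s c : ℂ) * evCM C c (1 * (t : PontryaginDual C)) ∂μ :=
            (integral_const_mul _ _).symm
        _ = ∫ t : ↥G, evCM C c (1 * ((((⟨s, hs⟩ : ↥G) * t) : ↥G) : PontryaginDual C)) ∂μ := by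
            refine integral_congr_ae (Filter.Eventually.of_forall fun t => ?_)
            show (s c : ℂ) * (((1 * (t : PontryaginDual C)) c : Circle) : ℂ)
              = (((1 * ((s * (t : PontryaginDual C)))) c : Circle) : ℂ)
            rw [one_mul, one_mul]
            push_cast
            rfl
        _ = J (evCM C c) 1 := hinv
    by_contra hne
    have h1 : ((s c : ℂ) - 1) * J (evCM C c) 1 = 0 := by rw [sub_mul, key]; ring
    rcases mul_eq_zero.mp h1 with h | h
    · exact hsc (Circle.coe_eq_one.mp (sub_eq_zero.mp h))
    · exact hne h
  have hIone : ∀ c : C, (∀ s ∈ G, s c = 1) → J (evCM C c) 1 = 1 := by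
    intro c hc
    have : ∀ t : ↥G, evCM C c (1 * (t : PontryaginDual C)) = 1 := by
      intro t
      show (((1 * (t : PontryaginDual C)) c : Circle) : ℂ) = 1
      rw [one_mul, hc _ t.2]
      rfl
    simp only [hJ, this]
    simp
  -- Urysohn
  have hGcomp : IsCompact (G : Set (PontryaginDual C)) := hGc.isCompact
  have hcoset : IsClosed ((fun x => φ * x) '' (G : Set (PontryaginDual C))) :=
    (hGcomp.image (continuous_mul_left φ)).isClosed
  have hdisj : Disjoint ((fun x => φ * x) '' (G : Set (PontryaginDual C)))
      (G : Set (PontryaginDual C)) := by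
    rw [Set.disjoint_left]
    rintro x ⟨g, hg, rfl⟩ hx
    exact hφ (by simpa using mul_mem hx (inv_mem hg))
  obtain ⟨f, hf0, hf1, hf01⟩ := exists_continuous_zero_one_of_isClosed hcoset hGc hdisj
  let fC : C(PontryaginDual C, ℂ) :=
    ⟨fun x => (f x : ℂ), Complex.continuous_ofReal.comp f.continuous⟩
  -- Stone-Weierstrass
  let SA : StarSubalgebra ℂ C(PontryaginDual C, ℂ) :=
    { toSubalgebra := Algebra.adjoin ℂ (Set.range (evCM C))
      star_mem' := fun ha => star_mem_adjoin ha }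
  have hsep : SA.SeparatesPoints := by
    intro ψ₁ ψ₂ hne
    obtain ⟨c, hc⟩ := DFunLike.ne_iff.mp hne
    refine ⟨_, ⟨evCM C c, Algebra.subset_adjoin ⟨c, rfl⟩, rfl⟩, ?_⟩
    show ((ψ₁ c : Circle) : ℂ) ≠ ((ψ₂ c : Circle) : ℂ)
    exact fun h => hc (Subtype.ext h)
  have htop := ContinuousMap.starSubalgebra_topologicalClosure_eq_top_of_separatesPoints SA hsep
  have hfC : fC ∈ closure (SA : Set C(PontryaginDual C, ℂ)) := by
    have : fC ∈ SA.topologicalClosure := by rw [htop]; exact StarSubalgebra.mem_top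
    exact this
  obtain ⟨g, hgSA, hdist⟩ := Metric.mem_closure_iff.mp hfC (1/4) (by norm_num)
  -- sum representation for g
  have hgspan : g ∈ Submodule.span ℂ (Set.range (evCM C)) := by
    have h2 : (Submonoid.closure (Set.range (evCM C)) : Set C(PontryaginDual C, ℂ))
        = Set.range (evCM C) := by
      rw [← MonoidHom.coe_mrange, Submonoid.closure_eq]
    have h1 := Algebra.adjoin_eq_span (R := ℂ) (s := Set.range (evCM C))
    have : g ∈ Subalgebra.toSubmodule (Algebra.adjoin ℂ (Set.range (evCM C))) := hgSA
    rw [h1] at this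
    rwa [h2] at this
  obtain ⟨n, a, v, hsum⟩ := Submodule.mem_span_set'.mp hgspan
  choose cs hcs using fun i => (v i).2
  have hg : ∀ y : PontryaginDual C, g y = ∑ i, a i * ((y (cs i) : Circle) : ℂ) := by
    intro y
    have := congrArg (fun h : C(PontryaginDual C, ℂ) => h y) hsum
    try simp only at this
    rw [← this]
    rw [show ((∑ i, a i • (v i : C(PontryaginDual C, ℂ))) y)
        = ∑ i, a i • ((v i : C(PontryaginDual C, ℂ)) y) by
      rw [ContinuousMap.coe_sum]; simp [Finset.sum_apply]]
    refine Finset.sum_congr rfl fun i _ => ?_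
    rw [← hcs i]
    rfl
  -- J of g
  have hJg : ∀ x : PontryaginDual C,
      J g x = ∑ i, a i * ((x (cs i) : Circle) : ℂ) * J (evCM C (cs i)) 1 := by
    intro x
    have : J g x = ∫ t : ↥G, ∑ i, a i * evCM C (cs i) (x * (t : PontryaginDual C)) ∂μ := by
      refine integral_congr_ae (Filter.Eventually.of_forall fun t => ?_)
      exact hg _
    rw [this, integral_finset_sum _ (fun i _ => (integr (evCM C (cs i)) x).const_mul (a i))]
    refine Finset.sum_congr rfl fun i _ => ?_
    rw [integral_const_mul]
    have := hchar (cs i) x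
    simp only [hJ] at this
    rw [this]
    ring
  -- J of fC at the two points
  have hJfC1 : J fC 1 = 1 := by
    have : ∀ t : ↥G, fC (1 * (t : PontryaginDual C)) = 1 := by
      intro t
      have : f ((t : PontryaginDual C)) = 1 := hf1 t.2
      show (f (1 * (t : PontryaginDual C)) : ℂ) = 1
      rw [one_mul, this]
      norm_num
    simp only [hJ, this]
    simp
  have hJfCφ : J fC φ = 0 := by
    have : ∀ t : ↥G, fC (φ * (t : PontryaginDual C)) = 0 := by
      intro t
      have : f (φ * (t : PontryaginDual C)) = 0 := hf0 ⟨_, t.2, rfl⟩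
      show (f (φ * (t : PontryaginDual C)) : ℂ) = 0
      rw [this]
      norm_num
    simp only [hJ, this]
    simp
  -- J g is close to J fC
  have hclose : ∀ x : PontryaginDual C, ‖J fC x - J g x‖ ≤ 1 / 4 := by
    intro x
    have : J fC x - J g x
        = ∫ t : ↥G, (fC (x * (t : PontryaginDual C)) - g (x * (t : PontryaginDual C))) ∂μ :=
      (integral_sub (integr fC x) (integr g x)).symm
    rw [this]
    have hb : ∀ t : ↥G, ‖fC (x * (t : PontryaginDual C)) - g (x * (t : PontryaginDual C))‖
        ≤ dist fC g := by
      intro t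
      rw [← dist_eq_norm]
      exact ContinuousMap.dist_apply_le_dist _
    calc ‖∫ t : ↥G, (fC (x * (t : PontryaginDual C)) - g (x * (t : PontryaginDual C))) ∂μ‖
        ≤ dist fC g * (μ univ).toReal :=
          norm_integral_le_of_norm_le_const (Filter.Eventually.of_forall hb)
      _ ≤ 1 / 4 := by
          rw [measure_univ]
          simp only [ENNReal.toReal_one, mul_one]
          exact le_of_lt hdist
  -- the two values of J g agree, giving the contradiction
  have heq : J g φ = J g 1 := by
    rw [hJg, hJg]
    refine Finset.sum_congr rfl fun i _ => ?_
    by_cases hgood : ∀ s ∈ G, s (cs i) = 1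
    · rw [hcontra (cs i) hgood]
      rfl
    · rw [hIzero (cs i) hgood]
      ring
  have h14 : ‖J fC 1 - J g 1‖ ≤ 1 / 4 := hclose 1
  have h24 : ‖J fC φ - J g φ‖ ≤ 1 / 4 := hclose φ
  rw [hJfC1] at h14
  rw [hJfCφ, heq] at h24
  have : (1 : ℝ) ≤ 1 / 2 := by
    calc (1 : ℝ) = ‖(1 - J g 1) - (0 - J g 1)‖ := by norm_num
      _ ≤ ‖1 - J g 1‖ + ‖0 - J g 1‖ := norm_sub_le _ _
      _ ≤ 1 / 4 + 1 / 4 := add_le_add h14 h24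
      _ = 1 / 2 := by norm_num
  linarith


/-- The set of characters vanishing on a finite-index subgroup, as a subgroup of the dual. -/
def SFI (C : Type*) [CommGroup C] [TopologicalSpace C] : Subgroup (PontryaginDual C) where
  carrier := {φ : PontryaginDual C | ∃ N : Subgroup C, N.FiniteIndex ∧ ∀ n ∈ N, φ n = 1}
  one_mem' := ⟨⊤, inferInstance, fun n _ => rfl⟩
  mul_mem' := by
    rintro φ₁ φ₂ ⟨N₁, h₁, hN₁⟩ ⟨N₂, h₂, hN₂⟩
    refine ⟨N₁ ⊓ N₂, inferInstance, fun n hn => ?_⟩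
    show φ₁ n * φ₂ n = 1
    rw [hN₁ n hn.1, hN₂ n hn.2, mul_one]
  inv_mem' := by
    rintro φ ⟨N, h, hN⟩
    refine ⟨N, h, fun n hn => ?_⟩
    show (φ n)⁻¹ = 1
    rw [hN n hn, inv_one]

end aux

/-- **Statement 11.** For a residually finite (discrete) abelian group `C`, the characters
that are trivial on some finite-index subgroup are dense in the Pontryagin dual of `C`. -/
theorem stmt_11 (C : Type*) [CommGroup C] [TopologicalSpace C] [DiscreteTopology C]
    (hRF : ∀ c : C, c ≠ 1 →
      ∃ (Q : Type) (_ : Group Q) (_ : Finite Q) (ψ : C →* Q), ψ c ≠ 1) :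
    Dense {φ : PontryaginDual C |
      ∃ N : Subgroup C, N.FiniteIndex ∧ ∀ n ∈ N, φ n = 1} := by
  haveI : CompactSpace (PontryaginDual C) := dual_compact
  set G : Subgroup (PontryaginDual C) := (SFI C).topologicalClosure with hGdef
  have hall : ∀ φ : PontryaginDual C, φ ∈ G := by
    intro φ
    by_contra hφ
    obtain ⟨c, hcG, hcφ⟩ :=
      exists_good G (Subgroup.isClosed_topologicalClosure (SFI C)) φ hφ
    have hc1 : c ≠ 1 := fun h => hcφ (by rw [h, map_one])
    obtain ⟨σ, hσS, hσc⟩ := exists_sep_char c hc1 hRF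
    exact hσc (hcG σ ((SFI C).le_topologicalClosure hσS))
  rw [dense_iff_closure_eq]
  have : closure ((SFI C : Set (PontryaginDual C))) = (G : Set (PontryaginDual C)) :=
    (Subgroup.topologicalClosure_coe).symm
  show closure ((SFI C : Set (PontryaginDual C))) = univ
  rw [this]
  exact eq_univ_iff_forall.mpr hall
end

section
/- Fix a prime p. For every integer k ≥ 1 and every ε > 0, there exist a positive integer q coprime to p and group homomorphisms β_l : (ℤ/qℤ, +) → 𝕋 for l = 1, …, p^k, such that for all integers j and l with 1 ≤ j ≤ p^k and 1 ≤ l ≤ p^k, one has |β_l(π_q(j/p^k)) − exp(2πi·j·l/p^k)| < ε, where π_q : ℤ[1/p] → ℤ/qℤ is the unique ring homomorphism (which exists since p is invertible modulo q). -/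
open Complex Real

/-- **Statement 12.** For every `k ≥ 1` and `ε > 0` there are `q` coprime to `p` and
characters `β_l : ℤ/qℤ → 𝕋`, `1 ≤ l ≤ p^k`, with
`|β_l(π_q(j/p^k)) − exp(2πi·j·l/p^k)| < ε` for all `1 ≤ j ≤ p^k`. -/
theorem stmt_12 (p : ℕ) (hp : p.Prime) (k : ℕ) (hk : 1 ≤ k) (ε : ℝ) (hε : 0 < ε) :
    ∃ q : ℕ, 0 < q ∧ Nat.Coprime q p ∧
      ∃ (πq : Localization.Away (p : ℤ) →+* ZMod q)
        (β : ℕ → (Multiplicative (ZMod q) →* Circle)),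
        ∀ j l : ℕ, 1 ≤ j → j ≤ p ^ k → 1 ≤ l → l ≤ p ^ k →
          ‖(((β l) (Multiplicative.ofAdd
                (πq (Localization.mk (j : ℤ)
                  ⟨(p : ℤ) ^ k, Submonoid.pow_mem _ (Submonoid.mem_powers _) k⟩))) : ℂ)
              - Complex.exp (2 * Real.pi * Complex.I * (j : ℂ) * (l : ℂ) / (p : ℂ) ^ k))‖
            < ε := by
  have hppos : 0 < p := hp.pos
  have hpk1 : 1 ≤ p ^ k := Nat.one_le_pow _ _ hppos
  obtain ⟨M, hM⟩ : ∃ M : ℕ,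
      2 * π * (p : ℝ) ^ k + 4 * π * (p : ℝ) ^ k / ε < M := exists_nat_gt _
  set q : ℕ := p ^ k * M + 1 with hqdef
  have hq0 : 0 < q := Nat.succ_pos _
  have hMq : (M : ℝ) ≤ q := by
    have : M ≤ q := le_trans (Nat.le_mul_of_pos_left M hpk1) (Nat.le_succ _)
    exact_mod_cast this
  have hqbig : 2 * π * (p : ℝ) ^ k + 4 * π * (p : ℝ) ^ k / ε < q := lt_of_lt_of_le hM hMq
  have hπpos : (0:ℝ) < π := Real.pi_pos
  have hpkposR : (0:ℝ) < (p : ℝ) ^ k := by positivity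
  have hqposR : (0:ℝ) < (q : ℝ) := by exact_mod_cast hq0
  -- coprimality
  have hcop : Nat.Coprime q p := by
    refine Nat.Coprime.symm ((hp.coprime_iff_not_dvd).mpr ?_)
    intro hd
    have h1 : p ∣ p ^ k * M := Dvd.dvd.mul_right (dvd_pow_self p (by omega)) M
    have : p ∣ 1 := (Nat.dvd_add_right h1).mp hd
    exact hp.one_lt.ne' (Nat.dvd_one.mp this)
  haveI : NeZero q := ⟨hq0.ne'⟩
  -- key modular identity : p^k * M = -1 in ZMod q
  have hpkM : ((p : ZMod q)) ^ k * (M : ZMod q) = -1 := by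
    have h0 : ((q : ℕ) : ZMod q) = 0 := ZMod.natCast_self q
    rw [hqdef] at h0
    push_cast at h0
    linear_combination h0
  -- the inverse of p in ZMod q
  set v : ZMod q := -((M : ZMod q) * (p : ZMod q) ^ (k - 1)) with hvdef
  have hv : (Int.castRingHom (ZMod q)) (p : ℤ) * v = 1 := by
    have hpk : (p : ZMod q) * (p : ZMod q) ^ (k - 1) = (p : ZMod q) ^ k := by
      rw [← pow_succ']
      congr 1
      omega
    simp only [Int.coe_castRingHom, Int.cast_natCast, hvdef]
    calc (p : ZMod q) * -((M : ZMod q) * (p : ZMod q) ^ (k - 1))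
        = -((p : ZMod q) * (p : ZMod q) ^ (k - 1) * (M : ZMod q)) := by ring
      _ = -((p : ZMod q) ^ k * (M : ZMod q)) := by rw [hpk]
      _ = 1 := by rw [hpkM, neg_neg]
  have hu : IsUnit ((Int.castRingHom (ZMod q)) (p : ℤ)) :=
    isUnit_iff_exists_inv.mpr ⟨v, hv⟩
  refine ⟨q, hq0, hcop,
    Localization.awayLift (Int.castRingHom (ZMod q)) (p : ℤ) hu,
    fun l => (AddChar.mulShift ZMod.toCircle (-(l : ZMod q))).toMonoidHom,
    fun j l hj1 hj2 hl1 hl2 => ?_⟩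
  -- compute v ^ k
  have hvk : v ^ k = -(M : ZMod q) := by
    have h1 : (p : ZMod q) ^ k * v ^ k = 1 := by
      rw [← mul_pow]
      have := hv
      simp only [Int.coe_castRingHom, Int.cast_natCast] at this
      rw [this, one_pow]
    have h2 : (p : ZMod q) ^ k * (-(M : ZMod q)) = 1 := by
      rw [mul_neg, hpkM, neg_neg]
    calc v ^ k = 1 * v ^ k := (one_mul _).symm
      _ = ((p : ZMod q) ^ k * (-(M : ZMod q))) * v ^ k := by rw [h2]
      _ = (-(M : ZMod q)) * ((p : ZMod q) ^ k * v ^ k) := by ring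
      _ = -(M : ZMod q) := by rw [h1, mul_one]
  -- evaluate πq on the localization element
  have hval : Localization.awayLift (Int.castRingHom (ZMod q)) (p : ℤ) hu
      (Localization.mk (j : ℤ)
        ⟨(p : ℤ) ^ k, Submonoid.pow_mem _ (Submonoid.mem_powers _) k⟩)
      = (j : ZMod q) * v ^ k :=
    Localization.awayLift_mk (Int.castRingHom (ZMod q)) (p : ℤ) (j : ℤ) v hv k
  rw [hval]
  -- evaluate the character
  have hchar : ((AddChar.mulShift ZMod.toCircle (-(l : ZMod q))).toMonoidHom
        (Multiplicative.ofAdd ((j : ZMod q) * v ^ k)) : ℂ)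
      = Complex.exp (2 * π * I * ((l * j * M : ℕ) : ℂ) / q) := by
    simp only [AddChar.toMonoidHom_apply, toAdd_ofAdd, AddChar.mulShift_apply]
    have harg : (-(l : ZMod q)) * ((j : ZMod q) * v ^ k) = ((l * j * M : ℕ) : ZMod q) := by
      rw [hvk]
      push_cast
      ring
    rw [harg, ZMod.toCircle_natCast]
  rw [hchar]
  -- the analytic estimate
  have hjR : (1:ℝ) ≤ (j:ℝ) := by exact_mod_cast hj1
  have hlR : (1:ℝ) ≤ (l:ℝ) := by exact_mod_cast hl1
  have hj2R : (j:ℝ) ≤ (p:ℝ)^k := by exact_mod_cast hj2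
  have hl2R : (l:ℝ) ≤ (p:ℝ)^k := by exact_mod_cast hl2
  set δ : ℝ := 2 * π * j * l / ((p : ℝ) ^ k * q) with hδdef
  have hδpos : 0 < δ := by positivity
  have hδle : δ ≤ 2 * π * (p:ℝ)^k / q := by
    rw [hδdef, div_le_div_iff₀ (by positivity) hqposR]
    calc 2 * π * (j:ℝ) * (l:ℝ) * q ≤ 2 * π * ((p:ℝ)^k) * ((p:ℝ)^k) * q := by
          have h1 : 2 * π * (j:ℝ) * (l:ℝ) ≤ 2 * π * ((p:ℝ)^k) * ((p:ℝ)^k) := by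
            have := mul_le_mul hj2R hl2R (by linarith) (le_of_lt hpkposR)
            nlinarith [hπpos]
          exact mul_le_mul_of_nonneg_right h1 (le_of_lt hqposR)
      _ = 2 * π * (p:ℝ)^k * ((p:ℝ)^k * q) := by ring
  have h2pk_lt_q : 2 * π * (p:ℝ)^k < q := by
    have h4 : 0 ≤ 4 * π * (p : ℝ) ^ k / ε := by positivity
    linarith
  have hδ1 : δ ≤ 1 := by
    calc δ ≤ 2 * π * (p:ℝ)^k / q := hδle
      _ ≤ 1 := by rw [div_le_one hqposR]; linarith
  have h2δ : 2 * δ < ε := by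
    have hq4 : 4 * π * (p:ℝ)^k / ε < q := by
      have h2 : 0 < 2 * π * (p : ℝ) ^ k := by positivity
      linarith
    have : 4 * π * (p:ℝ)^k < q * ε := by
      rw [div_lt_iff₀ hε] at hq4
      linarith
    calc 2 * δ ≤ 2 * (2 * π * (p:ℝ)^k / q) := by linarith
      _ = 4 * π * (p:ℝ)^k / q := by ring
      _ < ε := by rw [div_lt_iff₀ hqposR]; nlinarith
  -- rewrite difference of exponentials
  have hqC : ((q:ℂ)) ≠ 0 := by exact_mod_cast hqposR.ne'
  have hpkC : ((p:ℂ))^k ≠ 0 := by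
    have : ((p:ℂ)) ≠ 0 := by exact_mod_cast (Nat.cast_pos.mpr hppos).ne'
    exact pow_ne_zero _ this
  have hzdiff : 2 * (π:ℂ) * I * ((l * j * M : ℕ) : ℂ) / q
      - 2 * (π:ℂ) * I * (j : ℂ) * (l : ℂ) / (p : ℂ) ^ k = -(δ:ℂ) * I := by
    have hqcast : (q : ℂ) = (p:ℂ)^k * (M:ℂ) + 1 := by
      rw [hqdef]; push_cast; ring
    have hne : ((p:ℂ)^k * (M:ℂ) + 1) ≠ 0 := by rw [← hqcast]; exact hqC
    rw [hδdef]
    push_cast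
    field_simp
    rw [hqcast]; ring
  have key : ‖(Complex.exp (2 * (π:ℂ) * I * ((l * j * M : ℕ) : ℂ) / q)
      - Complex.exp (2 * (π:ℂ) * I * (j : ℂ) * (l : ℂ) / (p : ℂ) ^ k))‖ ≤ 2 * δ := by
    have hfact : Complex.exp (2 * (π:ℂ) * I * ((l * j * M : ℕ) : ℂ) / q)
        - Complex.exp (2 * (π:ℂ) * I * (j : ℂ) * (l : ℂ) / (p : ℂ) ^ k)
        = Complex.exp (2 * (π:ℂ) * I * (j : ℂ) * (l : ℂ) / (p : ℂ) ^ k)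
          * (Complex.exp (-(δ:ℂ) * I) - 1) := by
      rw [mul_sub, mul_one, ← Complex.exp_add, ← hzdiff]
      ring_nf
    rw [hfact, norm_mul]
    have habs1 : ‖(Complex.exp (2 * (π:ℂ) * I * (j : ℂ) * (l : ℂ) / (p : ℂ) ^ k))‖
        = 1 := by
      have hre : 2 * (π:ℂ) * I * (j : ℂ) * (l : ℂ) / (p : ℂ) ^ k
          = ((2 * π * j * l / (p:ℝ)^k : ℝ) : ℂ) * I := by push_cast; field_simp
      rw [hre, Complex.norm_exp_ofReal_mul_I]
    rw [habs1, one_mul]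
    have habsz : ‖(-(δ:ℂ) * I)‖ = δ := by
      simp [abs_of_pos hδpos]
    calc ‖(Complex.exp (-(δ:ℂ) * I) - 1)‖
        ≤ 2 * ‖(-(δ:ℂ) * I)‖ := Complex.norm_exp_sub_one_le (by rw [habsz]; exact hδ1)
      _ = 2 * δ := by rw [habsz]
  calc ‖(Complex.exp (2 * (π:ℂ) * I * ((l * j * M : ℕ) : ℂ) / q)
      - Complex.exp (2 * (π:ℂ) * I * (j : ℂ) * (l : ℂ) / (p : ℂ) ^ k))‖ ≤ 2 * δ := key
    _ < ε := h2δ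
end
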